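/- If a Banach space X has the bounded approximation property with constant λ, then X satisfies property (P): there is a constant C such that every finite rank operator u : X → X can be written as u = Σₙ vₙwₙ with finite rank operators vₙ, wₙ : X → X satisfying Σₙ ‖vₙ‖·‖wₙ‖ ≤ C‖u‖. -/

import Mathlib

open scoped BigOperators
noncomputable section

/-- `sup { (∑ |ξ(xᵢ)|^p)^{1/p} : ξ ∈ X*, ‖ξ‖ ≤ 1 }`. -/
def weakLpNorm (p : ℝ) {X : Type*} [NormedAddCommGroup X] [NormedSpace ℝ X]
    {n : ℕ} (x : Fin n → X) : ℝ :=
  ⨆ ξ : {ξ : X →L[ℝ] ℝ // ‖ξ‖ ≤ 1}, (∑ i, |ξ.1 (x i)| ^ p) ^ (1/p)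

/-- `u` is `(q,p)`-summing with constant `C`. -/
def IsQPSummingWith (q p : ℝ) {X Y : Type*} [NormedAddCommGroup X] [NormedSpace ℝ X]
    [NormedAddCommGroup Y] [NormedSpace ℝ Y] (u : X →L[ℝ] Y) (C : ℝ) : Prop :=
  ∀ (n : ℕ) (x : Fin n → X), (∑ i, ‖u (x i)‖ ^ q) ^ (1/q) ≤ C * weakLpNorm p x

/-- The `(q,p)`-summing norm `π_{q,p}(u)`. -/
def piQP (q p : ℝ) {X Y : Type*} [NormedAddCommGroup X] [NormedSpace ℝ X]
    [NormedAddCommGroup Y] [NormedSpace ℝ Y] (u : X →L[ℝ] Y) : ℝ :=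
  sInf {C | 0 ≤ C ∧ IsQPSummingWith q p u C}

/-- A bounded operator has finite rank if its range is finite dimensional. -/
def FiniteRank {X Y : Type*} [NormedAddCommGroup X] [NormedSpace ℝ X]
    [NormedAddCommGroup Y] [NormedSpace ℝ Y] (u : X →L[ℝ] Y) : Prop :=
  FiniteDimensional ℝ (LinearMap.range (u : X →ₗ[ℝ] Y))

/-- Property (P): every finite rank operator factors as a norm-convergent sum
`u = ∑ vₙ ∘ wₙ` of products of finite rank operators with `∑ ‖vₙ‖‖wₙ‖ ≤ C‖u‖`. -/
def PropertyP (X : Type*) [NormedAddCommGroup X] [NormedSpace ℝ X] : Prop :=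
  ∃ C : ℝ, ∀ u : X →L[ℝ] X, FiniteRank u →
    ∃ v w : ℕ → X →L[ℝ] X, (∀ n, FiniteRank (v n)) ∧ (∀ n, FiniteRank (w n)) ∧
      HasSum (fun n => (v n).comp (w n)) u ∧
      Summable (fun n => ‖v n‖ * ‖w n‖) ∧
      ∑' n, ‖v n‖ * ‖w n‖ ≤ C * ‖u‖

/-- The Rademacher functions on `[0,1]`. -/
def rademacher (n : ℕ) (t : ℝ) : ℝ := (-1 : ℝ) ^ ⌊(2 : ℝ) ^ (n + 1) * t⌋

/-- `X` has cotype `q` with constant `C`. -/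
def HasCotypeWith (q : ℝ) (X : Type*) [NormedAddCommGroup X] [NormedSpace ℝ X]
    (C : ℝ) : Prop :=
  ∀ (n : ℕ) (x : Fin n → X),
    (∑ i, ‖x i‖ ^ q) ^ (1/q) ≤
      C * (∫ t in (0:ℝ)..1, ‖∑ i, rademacher i.1 t • x i‖ ^ 2) ^ (1/(2:ℝ))

section Aux

variable {X : Type*} [NormedAddCommGroup X] [NormedSpace ℝ X]

lemma finiteRank_zero : FiniteRank (0 : X →L[ℝ] X) := by
  unfold FiniteRank
  have h : ((0 : X →L[ℝ] X) : X →ₗ[ℝ] X) = 0 := rfl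
  rw [h, LinearMap.range_zero]
  exact Module.Finite.bot ℝ X

lemma FiniteRank.comp_left (f g : X →L[ℝ] X) (hg : FiniteRank g) :
    FiniteRank (f.comp g) := by
  unfold FiniteRank at *
  haveI := hg
  rw [ContinuousLinearMap.toLinearMap_comp, LinearMap.range_comp]
  exact Module.Finite.map _ _

lemma FiniteRank.sub_comp (r T : X →L[ℝ] X) (hr : FiniteRank r) :
    FiniteRank (r - T.comp r) := by
  have : r - T.comp r = ((ContinuousLinearMap.id ℝ X) - T).comp r := by
    rw [ContinuousLinearMap.sub_comp, ContinuousLinearMap.id_comp]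
  rw [this]
  exact FiniteRank.comp_left _ _ hr

lemma exists_compact_superset_image (r : X →L[ℝ] X) (hr : FiniteRank r) :
    ∃ K : Set X, IsCompact K ∧ r '' Metric.closedBall 0 1 ⊆ K := by
  haveI : FiniteDimensional ℝ (LinearMap.range (r : X →ₗ[ℝ] X)) := hr
  set S := LinearMap.range (r : X →ₗ[ℝ] X)
  let g : X → S := fun x => ⟨r x, LinearMap.mem_range_self _ x⟩
  have hB : Bornology.IsBounded (g '' Metric.closedBall 0 1) := by
    rw [Metric.isBounded_iff_subset_closedBall 0]
    refine ⟨‖r‖, ?_⟩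
    rintro y ⟨x, hx, rfl⟩
    simp only [Metric.mem_closedBall, dist_zero_right]
    calc ‖g x‖ = ‖r x‖ := rfl
      _ ≤ ‖r‖ * ‖x‖ := r.le_opNorm x
      _ ≤ ‖r‖ * 1 := by
          apply mul_le_mul_of_nonneg_left _ (norm_nonneg r)
          simpa [dist_zero_right] using hx
      _ = ‖r‖ := mul_one _
  refine ⟨Subtype.val '' closure (g '' Metric.closedBall 0 1),
    (hB.isCompact_closure).image continuous_subtype_val, ?_⟩
  rintro y ⟨x, hx, rfl⟩
  exact ⟨g x, subset_closure ⟨x, hx, rfl⟩, rfl⟩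

variable (lam : ℝ)
variable (hBAP : ∀ K : Set X, IsCompact K → ∀ ε > 0, ∃ T : X →L[ℝ] X,
      FiniteRank T ∧ ‖T‖ ≤ lam ∧ ∀ x ∈ K, ‖T x - x‖ ≤ ε)

include hBAP in
lemma bap_step (r : X →L[ℝ] X) (hr : FiniteRank r) (ε : ℝ) (hε : 0 < ε) :
    ∃ T : X →L[ℝ] X, FiniteRank T ∧ ‖T‖ ≤ lam ∧ ‖r - T.comp r‖ ≤ ε := by
  obtain ⟨K, hK, hKsub⟩ := exists_compact_superset_image r hr
  obtain ⟨T, hT1, hT2, hT3⟩ := hBAP K hK ε hε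
  refine ⟨T, hT1, hT2, ?_⟩
  rw [norm_sub_rev]
  apply ContinuousLinearMap.opNorm_le_of_unit_norm (f := T.comp r - r) hε.le
  intro z hz
  have hz' : z ∈ Metric.closedBall (0:X) 1 := by
    simp [Metric.mem_closedBall, dist_zero_right, hz.le]
  have hmem : r z ∈ K := hKsub ⟨z, hz', rfl⟩
  simpa using hT3 (r z) hmem

variable (u : X →L[ℝ] X) (hu : FiniteRank u) (hu0 : 0 < ‖u‖)

/-- The sequence of remainders in the iterative factorization. -/
def bapSeqR : ℕ → {r : X →L[ℝ] X // FiniteRank r}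
  | 0 => ⟨u, hu⟩
  | n+1 =>
    let p := bapSeqR n
    let T := Classical.choose
      (bap_step lam hBAP p.1 p.2 (‖u‖ / 2 ^ (n+1)) (div_pos hu0 (by positivity)))
    ⟨p.1 - T.comp p.1, FiniteRank.sub_comp _ _ p.2⟩

/-- The sequence of approximating operators. -/
def bapSeqT (n : ℕ) : X →L[ℝ] X :=
  Classical.choose (bap_step lam hBAP (bapSeqR lam hBAP u hu hu0 n).1
    (bapSeqR lam hBAP u hu hu0 n).2 (‖u‖ / 2 ^ (n+1)) (div_pos hu0 (by positivity)))

lemma bapSeqT_spec (n : ℕ) :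
    FiniteRank (bapSeqT lam hBAP u hu hu0 n) ∧ ‖bapSeqT lam hBAP u hu hu0 n‖ ≤ lam ∧
      ‖(bapSeqR lam hBAP u hu hu0 n).1 -
        (bapSeqT lam hBAP u hu hu0 n).comp (bapSeqR lam hBAP u hu hu0 n).1‖ ≤ ‖u‖ / 2 ^ (n+1) :=
  Classical.choose_spec (bap_step lam hBAP (bapSeqR lam hBAP u hu hu0 n).1
    (bapSeqR lam hBAP u hu hu0 n).2 (‖u‖ / 2 ^ (n+1)) (div_pos hu0 (by positivity)))

lemma bapSeqR_succ (n : ℕ) :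
    (bapSeqR lam hBAP u hu hu0 (n+1)).1 =
      (bapSeqR lam hBAP u hu hu0 n).1 -
        (bapSeqT lam hBAP u hu hu0 n).comp (bapSeqR lam hBAP u hu hu0 n).1 := rfl

lemma bapSeqR_norm_le (n : ℕ) :
    ‖(bapSeqR lam hBAP u hu hu0 n).1‖ ≤ ‖u‖ / 2 ^ n := by
  cases n with
  | zero => simp [bapSeqR]
  | succ n =>
    rw [bapSeqR_succ]
    exact (bapSeqT_spec lam hBAP u hu hu0 n).2.2

lemma bapSeqR_partial_sum (N : ℕ) :
    ∑ i ∈ Finset.range N,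
      (bapSeqT lam hBAP u hu hu0 i).comp (bapSeqR lam hBAP u hu hu0 i).1 =
      u - (bapSeqR lam hBAP u hu hu0 N).1 := by
  induction N with
  | zero => simp [bapSeqR]
  | succ N ih =>
    rw [Finset.sum_range_succ, ih, bapSeqR_succ]
    abel

end Aux

/-- the λ-bounded approximation property implies property (P). -/
theorem bap_implies_propertyP (X : Type*) [NormedAddCommGroup X] [NormedSpace ℝ X]
    [CompleteSpace X] (lam : ℝ)
    (hBAP : ∀ K : Set X, IsCompact K → ∀ ε > 0, ∃ T : X →L[ℝ] X,
      FiniteRank T ∧ ‖T‖ ≤ lam ∧ ∀ x ∈ K, ‖T x - x‖ ≤ ε) :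
    PropertyP X := by
  have hlam : 0 ≤ lam := by
    obtain ⟨T, -, hT, -⟩ := hBAP {0} isCompact_singleton 1 one_pos
    exact (norm_nonneg T).trans hT
  refine ⟨2 * lam, fun u hu => ?_⟩
  rcases eq_or_ne u 0 with rfl | hu0
  · refine ⟨0, 0, fun n => finiteRank_zero, fun n => finiteRank_zero, ?_, ?_, ?_⟩
    · simpa using hasSum_zero
    · simpa using summable_zero
    · simp
  have hu0' : 0 < ‖u‖ := norm_pos_iff.mpr hu0
  set T := bapSeqT lam hBAP u hu hu0' with hT
  set r := fun n => (bapSeqR lam hBAP u hu hu0' n).1 with hr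
  have hspec := bapSeqT_spec lam hBAP u hu hu0'
  have hrle : ∀ n, ‖r n‖ ≤ ‖u‖ / 2 ^ n := bapSeqR_norm_le lam hBAP u hu hu0'
  have hbound : ∀ n, ‖T n‖ * ‖r n‖ ≤ lam * ‖u‖ * (1 / 2) ^ n := by
    intro n
    have h1 : ‖T n‖ * ‖r n‖ ≤ lam * (‖u‖ / 2 ^ n) :=
      mul_le_mul (hspec n).2.1 (hrle n) (norm_nonneg _) hlam
    calc ‖T n‖ * ‖r n‖ ≤ lam * (‖u‖ / 2 ^ n) := h1
      _ = lam * ‖u‖ * (1 / 2) ^ n := by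
          rw [div_pow, one_pow]; ring
  have hgeo : Summable (fun n : ℕ => lam * ‖u‖ * (1 / 2 : ℝ) ^ n) :=
    summable_geometric_two.mul_left _
  have hsummable : Summable (fun n => (T n).comp (r n)) := by
    apply Summable.of_norm
    apply Summable.of_nonneg_of_le (fun n => norm_nonneg _) _ hgeo
    intro n
    exact ((T n).opNorm_comp_le (r n)).trans (hbound n)
  have hnorm_summable : Summable (fun n => ‖T n‖ * ‖r n‖) :=
    Summable.of_nonneg_of_le (fun n => mul_nonneg (norm_nonneg _) (norm_nonneg _))
      hbound hgeo
  have hrtend : Filter.Tendsto (fun n => r n) Filter.atTop (nhds 0) := by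
    rw [tendsto_zero_iff_norm_tendsto_zero]
    apply squeeze_zero (fun n => norm_nonneg _) hrle
    have : Filter.Tendsto (fun n : ℕ => ‖u‖ * (1 / 2 : ℝ) ^ n) Filter.atTop (nhds (‖u‖ * 0)) :=
      (tendsto_pow_atTop_nhds_zero_of_lt_one (by norm_num) (by norm_num)).const_mul _
    simpa [div_pow, div_eq_mul_inv, inv_pow] using this
  have hpartial : Filter.Tendsto
      (fun N => ∑ i ∈ Finset.range N, (T i).comp (r i)) Filter.atTop (nhds u) := by
    have heq : (fun N => ∑ i ∈ Finset.range N, (T i).comp (r i)) =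
        fun N => u - r N := by
      funext N
      exact bapSeqR_partial_sum lam hBAP u hu hu0' N
    rw [heq]
    simpa using Filter.Tendsto.const_sub u hrtend
  have hhs : HasSum (fun n => (T n).comp (r n)) u := by
    have h1 := hsummable.hasSum
    have h2 := h1.tendsto_sum_nat
    have : ∑' n, (T n).comp (r n) = u := tendsto_nhds_unique h2 hpartial
    rwa [this] at h1
  refine ⟨T, r, fun n => (hspec n).1, fun n => (bapSeqR lam hBAP u hu hu0' n).2, hhs,
    hnorm_summable, ?_⟩
  calc ∑' n, ‖T n‖ * ‖r n‖ ≤ ∑' n, lam * ‖u‖ * (1 / 2 : ℝ) ^ n :=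
        Summable.tsum_le_tsum hbound hnorm_summable hgeo
    _ = lam * ‖u‖ * ∑' n, (1 / 2 : ℝ) ^ n := tsum_mul_left
    _ = lam * ‖u‖ * 2 := by rw [tsum_geometric_two]
    _ = 2 * lam * ‖u‖ := by ring
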